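/- If Φ(ζ) = F₁(ξ₁)e₁ + F₂(ξ₂)e₂ + F₃(ξ₁)e₃ + F₄(ξ₂)e₄ with F₁, F₃ holomorphic in a domain D₁ ⊂ ℂ and F₂, F₄ holomorphic in D₂ ⊂ ℂ, then Φ is Gateaux differentiable at each ζ in the sense that lim_{ε→0+} (Φ(ζ + εh) - Φ(ζ))ε⁻¹ = h·Φ'(ζ) for all h ∈ E₃, where Φ'(ζ) = F₁'(ξ₁)e₁ + F₂'(ξ₂)e₂ + F₃'(ξ₁)e₃ + F₄'(ξ₂)e₄. -/

import Mathlib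

open Quaternion

/-- The quaternionic unit `I` in `ℍ(ℂ)`. -/
noncomputable def Iq : ℍ[ℂ] := ⟨0,1,0,0⟩
/-- The quaternionic unit `J` in `ℍ(ℂ)`. -/
noncomputable def Jq : ℍ[ℂ] := ⟨0,0,1,0⟩
/-- The quaternionic unit `K` in `ℍ(ℂ)`. -/
noncomputable def Kq : ℍ[ℂ] := ⟨0,0,0,1⟩
/-- `e₁ = (1 + iI)/2`. -/
noncomputable def e1 : ℍ[ℂ] := (2:ℂ)⁻¹ • (1 + Complex.I • Iq)
/-- `e₂ = (1 - iI)/2`. -/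
noncomputable def e2 : ℍ[ℂ] := (2:ℂ)⁻¹ • (1 - Complex.I • Iq)
/-- `e₃ = (iJ - K)/2`. -/
noncomputable def e3 : ℍ[ℂ] := (2:ℂ)⁻¹ • (Complex.I • Jq - Kq)
/-- `e₄ = (iJ + K)/2`. -/
noncomputable def e4 : ℍ[ℂ] := (2:ℂ)⁻¹ • (Complex.I • Jq + Kq)
/-- `a e₁ + b e₂`; used for `i₂ = a₁e₁ + a₂e₂` and `i₃ = b₁e₁ + b₂e₂`. -/
noncomputable def sp (a b : ℂ) : ℍ[ℂ] := a • e1 + b • e2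
/-- A norm on `ℍ(ℂ)`, induced from `ℂ⁴` via the coordinate linear equivalence. -/
noncomputable instance : NormedAddCommGroup ℍ[ℂ] :=
  NormedAddCommGroup.induced ℍ[ℂ] (Fin 4 → ℂ)
    (QuaternionAlgebra.linearEquivTuple (-1:ℂ) (0:ℂ) (-1:ℂ)).toLinearMap
    (QuaternionAlgebra.linearEquivTuple (-1:ℂ) (0:ℂ) (-1:ℂ)).injective

noncomputable instance : NormedSpace ℝ ℍ[ℂ] :=
  NormedSpace.induced ℝ ℍ[ℂ] (Fin 4 → ℂ)
    ((QuaternionAlgebra.linearEquivTuple (-1:ℂ) (0:ℂ) (-1:ℂ)).restrictScalars ℝ).toLinearMap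

/-- `ξₖ(t) = x(t) + y(t)aₖ + z(t)bₖ` along a curve `(x,y,z)`. -/
noncomputable def xi (a b : ℂ) (x y z : ℝ → ℝ) (t : ℝ) : ℂ :=
  (x t : ℂ) + (y t : ℂ) * a + (z t : ℂ) * b

open Filter Topology

/-- `Φ(ζ) = F₁(ξ₁)e₁ + F₂(ξ₂)e₂ + F₃(ξ₁)e₃ + F₄(ξ₂)e₄` as a function of `(x,y,z)`. -/
noncomputable def Phi (a₁ a₂ b₁ b₂ : ℂ) (F₁ F₂ F₃ F₄ : ℂ → ℂ) (x y z : ℝ) : ℍ[ℂ] :=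
  F₁ ((x:ℂ) + y * a₁ + z * b₁) • e1 + F₂ ((x:ℂ) + y * a₂ + z * b₂) • e2 +
  F₃ ((x:ℂ) + y * a₁ + z * b₁) • e3 + F₄ ((x:ℂ) + y * a₂ + z * b₂) • e4

/-- `ℂ`-normed space structure on `ℍ(ℂ)`, induced the same way. -/
noncomputable instance : NormedSpace ℂ ℍ[ℂ] :=
  NormedSpace.induced ℂ ℍ[ℂ] (Fin 4 → ℂ)
    (QuaternionAlgebra.linearEquivTuple (-1:ℂ) (0:ℂ) (-1:ℂ)).toLinearMap

theorem key_limit (F : ℂ → ℂ) (D : Set ℂ) (hD : IsOpen D) (hF : DifferentiableOn ℂ F D)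
    (ξ c : ℂ) (hξ : ξ ∈ D) :
    Tendsto (fun ε : ℝ => ε⁻¹ • (F (ξ + ε * c) - F ξ)) (𝓝[>] 0)
      (𝓝 (c * deriv F ξ)) := by
  have hd : HasDerivAt F (deriv F ξ) ξ :=
    ((hF.differentiableAt (hD.mem_nhds hξ)).hasDerivAt)
  have hd' : HasDerivAt F (deriv F ξ) (ξ + (0:ℝ) * c) := by simpa using hd
  have hline : HasDerivAt (fun t : ℝ => ξ + (t : ℂ) * c) c 0 := by
    simpa using (((Complex.ofRealCLM.hasDerivAt (x := (0:ℝ)))).mul_const c).const_add ξ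
  have hg : HasDerivAt (fun t : ℝ => F (ξ + (t : ℂ) * c)) (c * deriv F ξ) 0 := by
    have := hd'.scomp 0 hline
    rw [smul_eq_mul] at this
    exact this
  have h2 : Tendsto (slope (fun t : ℝ => F (ξ + (t : ℂ) * c)) 0) (𝓝[>] 0)
      (𝓝 (c * deriv F ξ)) :=
    (hasDerivAt_iff_tendsto_slope.mp hg).mono_left
      (nhdsWithin_mono _ (fun t ht => ne_of_gt ht))
  refine h2.congr (fun ε => ?_)
  simp [slope_def_field, slope, Function.comp]

theorem prodid (c₁ c₂ d₁ d₂ d₃ d₄ : ℂ) :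
    (c₁ • e1 + c₂ • e2) * (d₁ • e1 + d₂ • e2 + d₃ • e3 + d₄ • e4) =
      (c₁ * d₁) • e1 + (c₂ * d₂) • e2 + (c₁ * d₃) • e3 + (c₂ * d₄) • e4 := by
  ext <;>
    simp [e1, e2, e3, e4] <;> simp [Iq, Jq, Kq, Complex.ext_iff] <;> ring_nf <;> simp

theorem hdecomp (h₀ h₁ h₂ : ℝ) (a₁ a₂ b₁ b₂ : ℂ) :
    (h₀ : ℂ) • (1:ℍ[ℂ]) + (h₁ : ℂ) • sp a₁ a₂ + (h₂ : ℂ) • sp b₁ b₂ =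
      ((h₀ : ℂ) + h₁ * a₁ + h₂ * b₁) • e1 + ((h₀ : ℂ) + h₁ * a₂ + h₂ * b₂) • e2 := by
  ext <;>
    simp [sp, e1, e2, -Complex.coe_smul] <;> simp [Iq, Complex.ext_iff] <;> ring_nf <;> simp

set_option synthInstance.maxHeartbeats 1000000 in
set_option maxHeartbeats 1000000 in
/-- `Φ` is right-Gateaux differentiable:
`lim_{ε→0+} (Φ(ζ + εh) - Φ(ζ))ε⁻¹ = h·Φ'(ζ)` for every `h = h₀ + h₁i₂ + h₂i₃ ∈ E₃`,
where `Φ'(ζ) = F₁'(ξ₁)e₁ + F₂'(ξ₂)e₂ + F₃'(ξ₁)e₃ + F₄'(ξ₂)e₄`. -/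
theorem Phi_gateaux_differentiable (a₁ a₂ b₁ b₂ : ℂ) (D₁ D₂ : Set ℂ)
    (hD₁ : IsOpen D₁) (hD₂ : IsOpen D₂) (F₁ F₂ F₃ F₄ : ℂ → ℂ)
    (hF₁ : DifferentiableOn ℂ F₁ D₁) (hF₃ : DifferentiableOn ℂ F₃ D₁)
    (hF₂ : DifferentiableOn ℂ F₂ D₂) (hF₄ : DifferentiableOn ℂ F₄ D₂)
    (x y z : ℝ)
    (hξ₁ : (x:ℂ) + y * a₁ + z * b₁ ∈ D₁) (hξ₂ : (x:ℂ) + y * a₂ + z * b₂ ∈ D₂)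
    (h₀ h₁ h₂ : ℝ) :
    Tendsto
      (fun ε : ℝ => ε⁻¹ •
        (Phi a₁ a₂ b₁ b₂ F₁ F₂ F₃ F₄ (x + ε * h₀) (y + ε * h₁) (z + ε * h₂) -
          Phi a₁ a₂ b₁ b₂ F₁ F₂ F₃ F₄ x y z))
      (𝓝[>] (0:ℝ))
      (𝓝 (((h₀ : ℂ) • (1:ℍ[ℂ]) + (h₁ : ℂ) • sp a₁ a₂ + (h₂ : ℂ) • sp b₁ b₂) *
        (deriv F₁ ((x:ℂ) + y * a₁ + z * b₁) • e1 +
         deriv F₂ ((x:ℂ) + y * a₂ + z * b₂) • e2 +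
         deriv F₃ ((x:ℂ) + y * a₁ + z * b₁) • e3 +
         deriv F₄ ((x:ℂ) + y * a₂ + z * b₂) • e4))) := by

  set ξ₁ : ℂ := (x:ℂ) + y * a₁ + z * b₁ with hxi1
  set ξ₂ : ℂ := (x:ℂ) + y * a₂ + z * b₂ with hxi2
  set c₁ : ℂ := (h₀ : ℂ) + h₁ * a₁ + h₂ * b₁ with hc1
  set c₂ : ℂ := (h₀ : ℂ) + h₁ * a₂ + h₂ * b₂ with hc2
  have harg1 : ∀ ε : ℝ, ((x + ε * h₀ : ℝ) : ℂ) + (y + ε * h₁ : ℝ) * a₁ +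
      (z + ε * h₂ : ℝ) * b₁ = ξ₁ + ε * c₁ := by
    intro ε; rw [hxi1, hc1]; push_cast; ring
  have harg2 : ∀ ε : ℝ, ((x + ε * h₀ : ℝ) : ℂ) + (y + ε * h₁ : ℝ) * a₂ +
      (z + ε * h₂ : ℝ) * b₂ = ξ₂ + ε * c₂ := by
    intro ε; rw [hxi2, hc2]; push_cast; ring
  have hfun : ∀ ε : ℝ,
      ε⁻¹ • (Phi a₁ a₂ b₁ b₂ F₁ F₂ F₃ F₄ (x + ε * h₀) (y + ε * h₁) (z + ε * h₂) -
        Phi a₁ a₂ b₁ b₂ F₁ F₂ F₃ F₄ x y z) =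
      (ε⁻¹ • (F₁ (ξ₁ + ε * c₁) - F₁ ξ₁)) • e1 + (ε⁻¹ • (F₂ (ξ₂ + ε * c₂) - F₂ ξ₂)) • e2 +
      (ε⁻¹ • (F₃ (ξ₁ + ε * c₁) - F₃ ξ₁)) • e3 + (ε⁻¹ • (F₄ (ξ₂ + ε * c₂) - F₄ ξ₂)) • e4 := by
    intro ε
    rw [Phi, Phi, harg1 ε, harg2 ε, ← hxi1, ← hxi2]
    simp only [smul_sub, smul_add, sub_smul, smul_assoc]
    abel
  have hlim : Tendsto
      (fun ε : ℝ =>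
        (ε⁻¹ • (F₁ (ξ₁ + ε * c₁) - F₁ ξ₁)) • e1 + (ε⁻¹ • (F₂ (ξ₂ + ε * c₂) - F₂ ξ₂)) • e2 +
        (ε⁻¹ • (F₃ (ξ₁ + ε * c₁) - F₃ ξ₁)) • e3 + (ε⁻¹ • (F₄ (ξ₂ + ε * c₂) - F₄ ξ₂)) • e4)
      (𝓝[>] (0:ℝ))
      (𝓝 ((c₁ * deriv F₁ ξ₁) • e1 + (c₂ * deriv F₂ ξ₂) • e2 +
        (c₁ * deriv F₃ ξ₁) • e3 + (c₂ * deriv F₄ ξ₂) • e4)) := by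
    exact ((((key_limit F₁ D₁ hD₁ hF₁ ξ₁ c₁ hξ₁).smul_const e1).add
      ((key_limit F₂ D₂ hD₂ hF₂ ξ₂ c₂ hξ₂).smul_const e2)).add
      ((key_limit F₃ D₁ hD₁ hF₃ ξ₁ c₁ hξ₁).smul_const e3)).add
      ((key_limit F₄ D₂ hD₂ hF₄ ξ₂ c₂ hξ₂).smul_const e4)
  have htarget : ((h₀ : ℂ) • (1:ℍ[ℂ]) + (h₁ : ℂ) • sp a₁ a₂ + (h₂ : ℂ) • sp b₁ b₂) *
      (deriv F₁ ξ₁ • e1 + deriv F₂ ξ₂ • e2 + deriv F₃ ξ₁ • e3 + deriv F₄ ξ₂ • e4) =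
      (c₁ * deriv F₁ ξ₁) • e1 + (c₂ * deriv F₂ ξ₂) • e2 +
        (c₁ * deriv F₃ ξ₁) • e3 + (c₂ * deriv F₄ ξ₂) • e4 := by
    rw [hdecomp, prodid]
  rw [htarget]
  exact hlim.congr (fun ε => (hfun ε).symm)
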